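/- For all integers j ≥ 2, c_j = 2 Σ_{j1+j2=j} b_{j1} b_{j2} satisfies c_2 = 2 and the recursion implied by (combining identities): c_j - 2(j-1) a_{j-1} = 2 Σ_{j1+j2=j-1} a_{j1} c_{j2}. -/

import Mathlib

def a (j : ℕ) : ℚ :=
  (Nat.factorial (2 * j) : ℚ) / ((Nat.factorial j : ℚ) * (Nat.factorial (j + 1) : ℚ))

def b (j : ℕ) : ℚ :=
  if j = 0 then 0 else (2 * (j : ℚ) - 1) * a (j - 1)

def c (j : ℕ) : ℚ :=
  2 * ∑ p ∈ Finset.HasAntidiagonal.antidiagonal j, b p.1 * b p.2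

open Finset

lemma ct_rec (n : ℕ) : ((n : ℚ) + 1) * (catalan n : ℚ) = (Nat.centralBinom n : ℚ) := by
  exact_mod_cast congrArg (Nat.cast : ℕ → ℚ) (succ_mul_catalan_eq_centralBinom n)

lemma cb_rec (n : ℕ) :
    ((n : ℚ) + 1) * (Nat.centralBinom (n + 1) : ℚ)
      = 2 * (2 * (n : ℚ) + 1) * (Nat.centralBinom n : ℚ) := by
  exact_mod_cast congrArg (Nat.cast : ℕ → ℚ) (Nat.succ_mul_centralBinom_succ n)

lemma a_eq (j : ℕ) : a j = (catalan j : ℚ) := by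
  have h2 : (Nat.centralBinom j : ℚ)
      = (Nat.factorial (2 * j) : ℚ) / ((Nat.factorial j : ℚ) * (Nat.factorial j : ℚ)) := by
    rw [Nat.centralBinom, Nat.cast_choose ℚ (by omega)]
    have : 2 * j - j = j := by omega
    rw [this]
  have h3 := ct_rec j
  rw [h2] at h3
  have hne : ((j : ℚ) + 1) ≠ 0 := by positivity
  have hf : (Nat.factorial j : ℚ) ≠ 0 := by
    exact_mod_cast (Nat.factorial_ne_zero j)
  have hfs : (Nat.factorial (j + 1) : ℚ) = ((j : ℚ) + 1) * (Nat.factorial j : ℚ) := by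
    rw [Nat.factorial_succ]; push_cast; ring
  rw [a, hfs]
  field_simp at h3 ⊢
  linear_combination -h3

lemma b_eq (k : ℕ) : b (k + 1) = (Nat.centralBinom (k + 1) : ℚ) / 2 := by
  have h := cb_rec k
  have h2 := ct_rec k
  have hne : ((k : ℚ) + 1) ≠ 0 := by positivity
  have hb : b (k + 1) = (2 * (k : ℚ) + 1) * (catalan k : ℚ) := by
    simp only [b, if_neg (Nat.succ_ne_zero k), Nat.add_sub_cancel, a_eq]
    push_cast; ring
  apply mul_left_cancel₀ hne
  rw [hb]
  linear_combination (2 * (k : ℚ) + 1) * h2 - h / 2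

lemma sym (f : ℕ → ℚ) (n : ℕ) :
    2 * ∑ k ∈ range (n + 1), (k : ℚ) * (f k * f (n - k))
      = (n : ℚ) * ∑ k ∈ range (n + 1), f k * f (n - k) := by
  have h := Finset.sum_range_reflect (fun k => (k : ℚ) * (f k * f (n - k))) (n + 1)
  simp only [Nat.add_sub_cancel] at h
  rw [two_mul]
  nth_rewrite 1 [← h]
  rw [← Finset.sum_add_distrib, Finset.mul_sum]
  apply Finset.sum_congr rfl
  intro k hk
  have hk' : k ≤ n := by simpa [Nat.lt_succ_iff] using hk
  have h1 : n - (n - k) = k := by omega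
  have h2 : ((n - k : ℕ) : ℚ) = (n : ℚ) - k := Nat.cast_sub hk'
  rw [h1, h2]
  ring

lemma V (n : ℕ) :
    ∑ k ∈ range (n + 1), (Nat.centralBinom k : ℚ) * (Nat.centralBinom (n - k) : ℚ) = 4 ^ n := by
  induction n with
  | zero => simp [Nat.centralBinom]
  | succ n ih =>
    have hne : ((n : ℚ) + 1) ≠ 0 := by positivity
    have hsym := sym (fun k => (Nat.centralBinom k : ℚ)) (n + 1)
    have hshift : ∑ k ∈ range (n + 1 + 1),
          (k : ℚ) * ((Nat.centralBinom k : ℚ) * (Nat.centralBinom (n + 1 - k) : ℚ))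
        = ∑ k ∈ range (n + 1),
          ((k : ℚ) + 1) * ((Nat.centralBinom (k + 1) : ℚ) * (Nat.centralBinom (n - k) : ℚ)) := by
      rw [Finset.sum_range_succ'
        (fun k => (k : ℚ) * ((Nat.centralBinom k : ℚ) * (Nat.centralBinom (n + 1 - k) : ℚ))) (n + 1)]
      simp only [Nat.cast_zero, zero_mul, add_zero]
      apply Finset.sum_congr rfl
      intro k hk
      have hnk : n + 1 - (k + 1) = n - k := by omega
      rw [hnk]
      push_cast; ring
    have hmid : ∑ k ∈ range (n + 1),
          ((k : ℚ) + 1) * ((Nat.centralBinom (k + 1) : ℚ) * (Nat.centralBinom (n - k) : ℚ))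
        = ∑ k ∈ range (n + 1),
          2 * (2 * (k : ℚ) + 1) * ((Nat.centralBinom k : ℚ) * (Nat.centralBinom (n - k) : ℚ)) := by
      apply Finset.sum_congr rfl
      intro k _
      have h := cb_rec k
      linear_combination (Nat.centralBinom (n - k) : ℚ) * h
    have hsym2 := sym (fun k => (Nat.centralBinom k : ℚ)) n
    rw [ih] at hsym2
    have hW : ∑ k ∈ range (n + 1 + 1),
          (k : ℚ) * ((Nat.centralBinom k : ℚ) * (Nat.centralBinom (n + 1 - k) : ℚ))
        = (2 * (n : ℚ) + 2) * 4 ^ n := by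
      rw [hshift, hmid]
      have hsplit : ∑ k ∈ range (n + 1),
            2 * (2 * (k : ℚ) + 1) * ((Nat.centralBinom k : ℚ) * (Nat.centralBinom (n - k) : ℚ))
          = 4 * ∑ k ∈ range (n + 1),
              (k : ℚ) * ((Nat.centralBinom k : ℚ) * (Nat.centralBinom (n - k) : ℚ))
            + 2 * ∑ k ∈ range (n + 1),
              (Nat.centralBinom k : ℚ) * (Nat.centralBinom (n - k) : ℚ) := by
        rw [Finset.mul_sum, Finset.mul_sum, ← Finset.sum_add_distrib]
        apply Finset.sum_congr rfl
        intro k _; ring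
      rw [hsplit, ih]
      linear_combination 2 * hsym2
    apply mul_left_cancel₀ hne
    push_cast at hsym
    linear_combination -hsym + 2 * hW

lemma ct_conv (n : ℕ) :
    ∑ k ∈ range (n + 1), (catalan k : ℚ) * (catalan (n - k) : ℚ) = (catalan (n + 1) : ℚ) := by
  have h2 : (catalan (n + 1) : ℚ)
      = ((∑ ij ∈ Finset.HasAntidiagonal.antidiagonal n, catalan ij.1 * catalan ij.2 : ℕ) : ℚ) := by
    exact_mod_cast congrArg (Nat.cast : ℕ → ℚ) (catalan_succ' n)
  push_cast at h2
  rw [Finset.Nat.sum_antidiagonal_eq_sum_range_succ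
    (fun x y => (catalan x : ℚ) * (catalan y : ℚ)) n] at h2
  exact h2.symm

lemma T (n : ℕ) :
    ∑ k ∈ range (n + 1), (catalan k : ℚ) * (Nat.centralBinom (n - k) : ℚ)
      = (Nat.centralBinom (n + 1) : ℚ) / 2 := by
  have hV := ct_conv n
  have hsym := sym (fun k => (catalan k : ℚ)) n
  rw [hV] at hsym
  have step : ∑ k ∈ range (n + 1), (catalan k : ℚ) * (Nat.centralBinom (n - k) : ℚ)
      = ∑ k ∈ range (n + 1), ((((n : ℚ) - k) + 1) * ((catalan k : ℚ) * (catalan (n - k) : ℚ))) := by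
    apply Finset.sum_congr rfl
    intro k hk
    have hk' : k ≤ n := by simpa [Nat.lt_succ_iff] using hk
    have hc : ((n - k : ℕ) : ℚ) = (n : ℚ) - k := Nat.cast_sub hk'
    have h3 := ct_rec (n - k)
    rw [hc] at h3
    linear_combination (catalan k : ℚ) * h3.symm
  rw [step]
  have expand : ∑ k ∈ range (n + 1),
        ((((n : ℚ) - k) + 1) * ((catalan k : ℚ) * (catalan (n - k) : ℚ)))
      = ((n : ℚ) + 1) * ∑ k ∈ range (n + 1), (catalan k : ℚ) * (catalan (n - k) : ℚ)
        - ∑ k ∈ range (n + 1), (k : ℚ) * ((catalan k : ℚ) * (catalan (n - k) : ℚ)) := by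
    rw [Finset.mul_sum, ← Finset.sum_sub_distrib]
    apply Finset.sum_congr rfl
    intro k _; ring
  rw [expand, hV]
  have hrec := ct_rec (n + 1)
  push_cast at hrec
  linear_combination -hsym / 2 + hrec / 2

lemma P (m : ℕ) :
    ∑ k ∈ range (m + 1), (catalan k : ℚ) * 4 ^ (m - k)
      = (4 ^ (m + 1) - (Nat.centralBinom (m + 1) : ℚ)) / 2 := by
  induction m with
  | zero => norm_num [Nat.centralBinom]
  | succ m ih =>
    rw [Finset.sum_range_succ]
    have hstep : ∑ k ∈ range (m + 1), (catalan k : ℚ) * (4 : ℚ) ^ (m + 1 - k)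
        = 4 * ∑ k ∈ range (m + 1), (catalan k : ℚ) * 4 ^ (m - k) := by
      rw [Finset.mul_sum]
      apply Finset.sum_congr rfl
      intro k hk
      have hk' : k ≤ m := by simpa [Nat.lt_succ_iff] using hk
      have : m + 1 - k = (m - k) + 1 := by omega
      rw [this, pow_succ]
      ring
    rw [hstep, ih]
    have h1 := cb_rec (m + 1)
    have h2 := ct_rec (m + 1)
    have hne : ((m : ℚ) + 2) ≠ 0 := by positivity
    push_cast at h1 h2
    apply mul_left_cancel₀ hne
    simp only [Nat.sub_self, pow_zero, mul_one]
    linear_combination h2 + h1 / 2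

lemma b_zero : b 0 = 0 := by simp [b]

lemma c_zero : c 0 = 0 := by
  rw [c, Finset.Nat.sum_antidiagonal_eq_sum_range_succ (fun x y => b x * b y)]
  simp [b_zero]

lemma c_eq (n : ℕ) : c (n + 1) = 4 ^ (n + 1) / 2 - (Nat.centralBinom (n + 1) : ℚ) := by
  have hpeel : ∀ f : ℕ → ℚ, ∑ k ∈ range (n + 2), f k
      = f 0 + (∑ k ∈ range n, f (k + 1)) + f (n + 1) := by
    intro f
    rw [Finset.sum_range_succ' f (n + 1), Finset.sum_range_succ (fun k => f (k + 1)) n]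
    ring
  have hb : ∑ k ∈ range (n + 2), b k * b (n + 1 - k)
      = ∑ k ∈ range n, (Nat.centralBinom (k + 1) : ℚ) * (Nat.centralBinom (n - k) : ℚ) / 4 := by
    rw [hpeel (fun k => b k * b (n + 1 - k))]
    simp only [b_zero, zero_mul, Nat.sub_self, mul_zero, add_zero, zero_add]
    apply Finset.sum_congr rfl
    intro k hk
    have hk' : k < n := by simpa using hk
    have h1 : n + 1 - (k + 1) = n - k := by omega
    obtain ⟨l, hl⟩ : ∃ l, n - k = l + 1 := ⟨n - k - 1, by omega⟩
    rw [h1, hl, b_eq, b_eq, ← hl]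
    ring
  have hcb : ∑ k ∈ range (n + 2),
        (Nat.centralBinom k : ℚ) * (Nat.centralBinom (n + 1 - k) : ℚ)
      = (Nat.centralBinom (n + 1) : ℚ)
        + (∑ k ∈ range n, (Nat.centralBinom (k + 1) : ℚ) * (Nat.centralBinom (n - k) : ℚ))
        + (Nat.centralBinom (n + 1) : ℚ) := by
    rw [hpeel (fun k => (Nat.centralBinom k : ℚ) * (Nat.centralBinom (n + 1 - k) : ℚ))]
    simp only [Nat.centralBinom_zero, Nat.cast_one, one_mul, Nat.sub_self, mul_one]
    congr 2
    apply Finset.sum_congr rfl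
    intro k hk
    have h1 : n + 1 - (k + 1) = n - k := by omega
    rw [h1]
  have hV := V (n + 1)
  rw [hcb] at hV
  rw [c, Finset.Nat.sum_antidiagonal_eq_sum_range_succ (fun x y => b x * b y), hb,
    ← Finset.sum_div]
  linear_combination hV / 2

theorem c_recursion :
    c 2 = 2 ∧
    ∀ j : ℕ, 2 ≤ j →
      c j - 2 * ((j : ℚ) - 1) * a (j - 1) =
        2 * ∑ p ∈ Finset.HasAntidiagonal.antidiagonal (j - 1), a p.1 * c p.2 := by
  constructor
  · rw [show (2 : ℕ) = 1 + 1 from rfl, c_eq]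
    norm_num [Nat.centralBinom, Nat.choose]
  · intro j hj
    obtain ⟨m, rfl⟩ : ∃ m, j = m + 2 := ⟨j - 2, by omega⟩
    have hsub : m + 2 - 1 = m + 1 := by omega
    rw [hsub, Finset.Nat.sum_antidiagonal_eq_sum_range_succ (fun x y => a x * c y)]
    have key : ∀ k ∈ range (m + 2), a k * c (m + 1 - k)
        = (catalan k : ℚ) * 4 ^ (m + 1 - k) / 2
          - (catalan k : ℚ) * (Nat.centralBinom (m + 1 - k) : ℚ)
          + (if k = m + 1 then (catalan (m + 1) : ℚ) / 2 else 0) := by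
      intro k hk
      have hk' : k ≤ m + 1 := by simpa [Nat.lt_succ_iff] using hk
      rcases eq_or_lt_of_le hk' with h | h
      · subst h
        simp only [Nat.sub_self, if_pos rfl, pow_zero, Nat.centralBinom_zero, Nat.cast_one,
          c_zero, mul_zero, a_eq, if_true]
        ring
      · obtain ⟨l, hl⟩ : ∃ l, m + 1 - k = l + 1 := ⟨m - k, by omega⟩
        rw [if_neg (by omega), hl, c_eq, ← hl, a_eq]
        ring
    rw [Finset.sum_congr rfl key]
    rw [Finset.sum_add_distrib, Finset.sum_sub_distrib, Finset.sum_ite_eq'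
      (range (m + 2)) (m + 1) (fun _ => (catalan (m + 1) : ℚ) / 2)]
    simp only [Finset.mem_range, Nat.lt_add_one, if_pos]
    have hP : ∑ k ∈ range (m + 2), (catalan k : ℚ) * 4 ^ (m + 1 - k) / 2
        = (4 ^ (m + 2) - (Nat.centralBinom (m + 2) : ℚ)) / 4 := by
      rw [← Finset.sum_div, P (m + 1)]
      ring
    rw [hP, T (m + 1)]
    rw [c_eq (m + 1), a_eq]
    have h1 := cb_rec (m + 1)
    have h2 := ct_rec (m + 1)
    have hne : ((m : ℚ) + 2) ≠ 0 := by positivity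
    push_cast at h1 h2 ⊢
    apply mul_left_cancel₀ hne
    linear_combination h1 / 2 - (2 * (m : ℚ) + 3) * h2
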